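/- Let H(x,y,z) = (1−x²)(1−xz) − y(1+xz) and fix reals ρ > 0 and 0 < δ < 2. Define x* = √(1 − 2ρ/(2+2ρ−δ)), z* = (√(ρ²+δ²) − ρ)/(x*·δ), and y* = 2(√(ρ²+δ²) − δ)/(2 − δ + 2ρ). Then x*, y*, z* > 0, H(x*,y*,z*) = 0, and at the point (x*,y*,z*) the proportionality relations (x·∂H/∂x)/2 = (y·∂H/∂y)/ρ = (z·∂H/∂z)/δ hold. -/

import Mathlib

open MvPolynomial

/-- `H(x,y,z) = (1 − x²)(1 − xz) − y(1 + xz)` as a polynomial in three variables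
(variable `0` is `x`, `1` is `y`, `2` is `z`). -/
noncomputable def Hstd : MvPolynomial (Fin 3) ℝ :=
  (1 - X 0 ^ 2) * (1 - X 0 * X 2) - X 1 * (1 + X 0 * X 2)

/-- The explicit point `(x*, y*, z*)` is positive, lies on `H = 0`, and satisfies the
critical-point proportionality relations `(x H_x)/2 = (y H_y)/ρ = (z H_z)/δ`. -/
theorem stmt4 (ρ δ : ℝ) (hρ : 0 < ρ) (hδ0 : 0 < δ) (hδ2 : δ < 2) :
    let xs : ℝ := Real.sqrt (1 - 2 * ρ / (2 + 2 * ρ - δ))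
    let zs : ℝ := (Real.sqrt (ρ ^ 2 + δ ^ 2) - ρ) / (xs * δ)
    let ys : ℝ := 2 * (Real.sqrt (ρ ^ 2 + δ ^ 2) - δ) / (2 - δ + 2 * ρ)
    0 < xs ∧ 0 < ys ∧ 0 < zs ∧
    eval ![xs, ys, zs] Hstd = 0 ∧
    (xs * eval ![xs, ys, zs] (pderiv 0 Hstd)) / 2
      = (ys * eval ![xs, ys, zs] (pderiv 1 Hstd)) / ρ ∧
    (ys * eval ![xs, ys, zs] (pderiv 1 Hstd)) / ρ
      = (zs * eval ![xs, ys, zs] (pderiv 2 Hstd)) / δ := by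
  intro xs zs ys
  have hD : (0:ℝ) < 2 + 2 * ρ - δ := by linarith
  set s : ℝ := Real.sqrt (ρ ^ 2 + δ ^ 2) with hsdef
  have hs2 : s ^ 2 = ρ ^ 2 + δ ^ 2 := Real.sq_sqrt (by positivity)
  have hs0 : 0 ≤ s := Real.sqrt_nonneg _
  have hsρ : ρ < s := by nlinarith
  have hsδ : δ < s := by nlinarith
  have harg : (0:ℝ) < 1 - 2 * ρ / (2 + 2 * ρ - δ) := by
    rw [sub_pos, div_lt_one hD]; linarith
  have hxpos : 0 < xs := Real.sqrt_pos.mpr harg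
  have hDne : 2 * (1 + ρ) - δ ≠ 0 := by linarith
  have hx2 : xs ^ 2 = (2 - δ) / (2 + 2 * ρ - δ) := by
    show Real.sqrt _ ^ 2 = _
    rw [Real.sq_sqrt harg.le]
    field_simp
    ring
  have hz : zs = (s - ρ) / (xs * δ) := rfl
  have hy : ys = 2 * (s - δ) / (2 - δ + 2 * ρ) := rfl
  have hzpos : 0 < zs := by
    rw [hz]; exact div_pos (by linarith) (mul_pos hxpos hδ0)
  have hypos : 0 < ys := by
    rw [hy]; exact div_pos (by linarith) (by linarith)
  have hD' : (2 - δ + 2 * ρ) ≠ 0 := by linarith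
  have hy' : ys = 2 * (s - δ) / (2 + 2 * ρ - δ) := by rw [hy]; ring_nf
  have ha : xs * zs = (s - ρ) / δ := by
    rw [hz]; field_simp
  have key1 : (s - δ) * (s + δ - ρ) = ρ * (ρ + δ - s) := by linear_combination hs2
  have key2 : (s - ρ) * (s + ρ - δ) = δ * (ρ + δ - s) := by linear_combination hs2
  have e0 : eval ![xs, ys, zs] Hstd = (1 - xs^2) * (1 - xs*zs) - ys * (1 + xs*zs) := by
    simp [Hstd]
  have e1 : xs * eval ![xs, ys, zs] (pderiv 0 Hstd)
      = -2*xs^2*(1 - xs*zs) - (xs*zs)*(1 - xs^2) - ys*(xs*zs) := by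
    simp [Hstd, pderiv_mul, pderiv_X]; ring
  have e2 : ys * eval ![xs, ys, zs] (pderiv 1 Hstd) = -ys*(1 + xs*zs) := by
    simp [Hstd, pderiv_mul, pderiv_X]; ring
  have e3 : zs * eval ![xs, ys, zs] (pderiv 2 Hstd) = -(xs*zs)*(1 - xs^2) - (xs*zs)*ys := by
    simp [Hstd, pderiv_mul, pderiv_X]; ring
  set c : ℝ := -2 * (δ + ρ - s) / ((2 + 2*ρ - δ) * δ) with hc
  have v1 : (xs * eval ![xs, ys, zs] (pderiv 0 Hstd)) / 2 = c := by
    rw [e1, hx2, ha, hy', hc]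
    field_simp
    linear_combination (-2 : ℝ) * hs2
  have v2 : (ys * eval ![xs, ys, zs] (pderiv 1 Hstd)) / ρ = c := by
    rw [e2, ha, hy', hc]
    field_simp
    linear_combination (-1 : ℝ) * hs2
  have v3 : (zs * eval ![xs, ys, zs] (pderiv 2 Hstd)) / δ = c := by
    rw [e3, hx2, ha, hy', hc]
    field_simp
    linear_combination (-2 : ℝ) * hs2
  refine ⟨hxpos, hypos, hzpos, ?_, by rw [v1, v2], by rw [v2, v3]⟩
  rw [e0, hx2, ha, hy']
  field_simp
  linear_combination (-2 : ℝ) * hs2
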